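/- Let \Sigma be a finite cyclic group of order f with p \nmid f, where p is a prime, and let I = (\sigma - 1, \gamma - 1) be the augmentation ideal of \Lambda = \mathbb{Z}_p[\Sigma][[\gamma - 1]] (where \sigma generates \Sigma and \gamma is the variable of the power series ring, a group-like element). Let e_1 = \frac{1}{f}\sum_{g \in \Sigma} g be the idempotent for the trivial character. Then I is a principal ideal generated by (1 - e_1) + (\gamma - 1)e_1. -/

import Mathlib

/-- Let `Σ` be a finite cyclic group of order `f` prime to `p`, generated by `σ`, and let
`Λ = ℤ_p[Σ][[T]]` with group-like element `γ = 1 + T`.  With `e₁ = f⁻¹ ∑_{g} g` the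
idempotent of the trivial character, the augmentation ideal `I = (σ - 1, γ - 1)` is
principal, generated by `(1 - e₁) + (γ - 1) e₁`. -/
theorem stmt_6 (p : ℕ) [Fact (Nat.Prime p)] (G : Type*) [CommGroup G] [Fintype G]
    (σ : G) (hσ : ∀ g : G, g ∈ Subgroup.zpowers σ)
    (hpf : ¬ p ∣ Fintype.card G)
    (e₁ : MonoidAlgebra ℤ_[p] G)
    (he₁ : e₁ = Ring.inverse ((Fintype.card G : ℤ_[p])) •
      ∑ g : G, MonoidAlgebra.of ℤ_[p] G g) :
    Ideal.span ({PowerSeries.C (MonoidAlgebra.of ℤ_[p] G σ) - 1,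
        ((1 : PowerSeries (MonoidAlgebra ℤ_[p] G)) + PowerSeries.X) - 1} :
          Set (PowerSeries (MonoidAlgebra ℤ_[p] G))) =
      Ideal.span {PowerSeries.C (1 - e₁) +
        (((1 : PowerSeries (MonoidAlgebra ℤ_[p] G)) + PowerSeries.X) - 1) *
          PowerSeries.C e₁} := by
  have hX : ((1 : PowerSeries (MonoidAlgebra ℤ_[p] G)) + PowerSeries.X) - 1
      = PowerSeries.X := by ring
  rw [hX]
  -- card is a unit in ℤ_p
  have hunit : IsUnit ((Fintype.card G : ℤ_[p])) := by
    by_contra h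
    rw [PadicInt.not_isUnit_iff] at h
    have h' : ((Fintype.card G : ℤ) : ℤ_[p]) = (Fintype.card G : ℤ_[p]) := by push_cast; ring
    rw [← h', PadicInt.norm_int_lt_one_iff_dvd] at h
    exact hpf (Int.natCast_dvd_natCast.mp h)
  -- e₁ * of h = e₁
  have habs : ∀ h : G, e₁ * MonoidAlgebra.of ℤ_[p] G h = e₁ := by
    intro h
    rw [he₁, smul_mul_assoc, Finset.sum_mul]
    congr 1
    refine Fintype.sum_equiv (Equiv.mulRight h) _ _ (fun g => ?_)
    simp [← map_mul]
  -- idempotent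
  have hid : e₁ * e₁ = e₁ := by
    nth_rewrite 2 [he₁]
    rw [mul_smul_comm, Finset.mul_sum]
    simp_rw [habs]
    rw [Finset.sum_const, Finset.card_univ, ← Nat.cast_smul_eq_nsmul ℤ_[p], smul_smul,
      Ring.inverse_mul_cancel _ hunit, one_smul]
  -- of σ - 1 divides 1 - e₁
  have hdvd : (MonoidAlgebra.of ℤ_[p] G σ - 1) ∣ (1 - e₁) := by
    have h1 : (MonoidAlgebra.of ℤ_[p] G σ - 1) ∣
        ∑ g : G, (MonoidAlgebra.of ℤ_[p] G g - 1) := by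
      refine Finset.dvd_sum (fun g _ => ?_)
      obtain ⟨n, hn⟩ := mem_powers_iff_mem_zpowers.mpr (hσ g)
      have : MonoidAlgebra.of ℤ_[p] G g - 1
          = (MonoidAlgebra.of ℤ_[p] G σ) ^ n - 1 ^ n := by
        rw [← hn, map_pow, one_pow]
      rw [this]
      exact sub_dvd_pow_sub_pow _ _ n
    have h2 : 1 - e₁ =
        (algebraMap ℤ_[p] (MonoidAlgebra ℤ_[p] G)
          (-Ring.inverse ((Fintype.card G : ℤ_[p])))) *
        ∑ g : G, (MonoidAlgebra.of ℤ_[p] G g - 1) := by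
      rw [Finset.sum_sub_distrib, Finset.sum_const, Finset.card_univ, map_neg, neg_mul,
        mul_sub, ← Algebra.smul_def, ← he₁]
      have hcard : (algebraMap ℤ_[p] (MonoidAlgebra ℤ_[p] G)
          (Ring.inverse ((Fintype.card G : ℤ_[p])))) * (Fintype.card G • (1 : MonoidAlgebra ℤ_[p] G)) = 1 := by
        rw [nsmul_eq_mul, mul_one, ← map_natCast (algebraMap ℤ_[p] (MonoidAlgebra ℤ_[p] G)),
          ← map_mul, Ring.inverse_mul_cancel _ hunit, map_one]
      rw [hcard]; ring
    rw [h2]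
    exact Dvd.dvd.mul_left h1 _
  obtain ⟨c, hc⟩ := hdvd
  set A := PowerSeries (MonoidAlgebra ℤ_[p] G) with hA
  have hε2 : (PowerSeries.C e₁) * (PowerSeries.C e₁)
      = PowerSeries.C e₁ := by rw [← map_mul, hid]
  have hSε : (PowerSeries.C (MonoidAlgebra.of ℤ_[p] G σ) - 1) *
      (PowerSeries.C e₁) = 0 := by
    rw [sub_mul, one_mul, ← map_mul, mul_comm, habs, sub_self]
  have hg : PowerSeries.C (1 - e₁) +
      PowerSeries.X * PowerSeries.C e₁
      = (1 - PowerSeries.C e₁) +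
        PowerSeries.X * PowerSeries.C e₁ := by
    rw [map_sub, map_one]
  set S := PowerSeries.C (MonoidAlgebra.of ℤ_[p] G σ) - 1 with hSdef
  set ε := PowerSeries.C e₁ with hεdef
  apply le_antisymm
  · rw [Ideal.span_le, Set.insert_subset_iff, Set.singleton_subset_iff]
    constructor
    · refine Ideal.mem_span_singleton'.mpr ⟨S * (1 - ε), ?_⟩
      rw [hg]
      linear_combination (S - S * PowerSeries.X) * hε2 - hSε
    · refine Ideal.mem_span_singleton'.mpr ⟨ε + PowerSeries.X * (1 - ε), ?_⟩
      rw [hg]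
      linear_combination (2 * PowerSeries.X - PowerSeries.X * PowerSeries.X - 1) * hε2
  · rw [Ideal.span_le, Set.singleton_subset_iff]
    refine Ideal.mem_span_pair.mpr ⟨PowerSeries.C c, ε, ?_⟩
    have hcc : PowerSeries.C c * S
        = PowerSeries.C (1 - e₁) := by
      rw [hSdef, mul_sub, mul_one, ← map_mul, ← map_sub]
      congr 1
      rw [hc]; ring
    rw [hcc]; ring
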